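/- For any real t ≥ 1, the maximum of (1-μ)l² - tμk² over μ, k, l ∈ [0,1] subject to tμk² ≤ (1-μ)l², tμk ≥ (1-μ)l, and k ≤ l, equals (√(1+1/t) - √(1/t))² = 1 + 2/t - 2√((1/t)(1+1/t)), attained at μ = 1/√(t+1), k = (√(t+1)-1)/t, l = 1. -/

import Mathlib

private lemma stmt4_aux (t s μ k l : ℝ) (ht : 1 ≤ t) (hs2 : s ^ 2 = t + 1)
    (hμ0 : 0 ≤ μ) (hμ1 : μ ≤ 1) (hk0 : 0 ≤ k) (hl0 : 0 ≤ l) (hl1 : l ≤ 1)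
    (hc2 : (1 - μ) * l ≤ t * μ * k) (hkl : k ≤ l) :
    (1 - μ) * l ^ 2 - t * μ * k ^ 2 ≤ (s - 1) ^ 2 / t := by
  have ht0 : (0:ℝ) < t := by linarith
  rcases eq_or_lt_of_le hl0 with hle | hlp
  · -- l = 0
    have hk' : k = 0 := le_antisymm (by linarith) hk0
    have h0 : (0:ℝ) ≤ (s - 1) ^ 2 / t := by positivity
    rw [← hle, hk']
    nlinarith [h0]
  · -- l > 0
    have hμp : 0 < μ := by
      by_contra h
      push_neg at h
      have hμe : μ = 0 := le_antisymm h hμ0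
      rw [hμe] at hc2
      nlinarith
    have hm1 : 0 ≤ 1 - μ := by linarith
    have hm : 1 - μ ≤ t * μ := by
      have h1 : t * μ * k ≤ t * μ * l := by
        have := mul_le_mul_of_nonneg_left hkl (by positivity : (0:ℝ) ≤ t * μ)
        linarith
      have h2' : (1 - μ) * l ≤ t * μ * l := le_trans hc2 h1
      nlinarith
    have e1 : (1 - μ) * l * k ≤ t * μ * k * k :=
      mul_le_mul_of_nonneg_right hc2 hk0
    have step1 : (1 - μ) * l ^ 2 - t * μ * k ^ 2 ≤ (1 - μ) * l * (l - k) := by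
      nlinarith [e1]
    have step2 : t * μ * ((1 - μ) * l * (l - k)) ≤ (1 - μ) * l ^ 2 * (t * μ - (1 - μ)) := by
      have h := mul_le_mul_of_nonneg_left hc2 (mul_nonneg hm1 hl0)
      nlinarith [h]
    have step3 : (1 - μ) * l ^ 2 * (t * μ - (1 - μ)) ≤ (1 - μ) * (t * μ - (1 - μ)) := by
      have hA : 0 ≤ (1 - μ) * (t * μ - (1 - μ)) := mul_nonneg hm1 (by linarith)
      have hl2 : l ^ 2 ≤ 1 := by nlinarith
      nlinarith [mul_le_mul_of_nonneg_left hl2 hA]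
    have step4 : (1 - μ) * (t * μ - (1 - μ)) ≤ μ * (s - 1) ^ 2 := by
      have e : μ * (s - 1) ^ 2 - (1 - μ) * (t * μ - (1 - μ)) = (s * μ - 1) ^ 2 := by
        linear_combination μ * (1 - μ) * hs2
      nlinarith [sq_nonneg (s * μ - 1), e]
    have chain : t * μ * ((1 - μ) * l ^ 2 - t * μ * k ^ 2) ≤ μ * (s - 1) ^ 2 := by
      calc t * μ * ((1 - μ) * l ^ 2 - t * μ * k ^ 2)
          ≤ t * μ * ((1 - μ) * l * (l - k)) := by
            apply mul_le_mul_of_nonneg_left step1 (by positivity)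
        _ ≤ (1 - μ) * l ^ 2 * (t * μ - (1 - μ)) := step2
        _ ≤ (1 - μ) * (t * μ - (1 - μ)) := step3
        _ ≤ μ * (s - 1) ^ 2 := step4
    rw [le_div_iff₀ ht0]
    have := (mul_le_mul_iff_right₀ hμp).mp (by linarith [chain] :
      μ * (t * ((1 - μ) * l ^ 2 - t * μ * k ^ 2)) ≤ μ * (s - 1) ^ 2)
    linarith


theorem stmt4 (t : ℝ) (ht : 1 ≤ t) :
    IsGreatest {x : ℝ | ∃ μ k l : ℝ, μ ∈ Set.Icc (0:ℝ) 1 ∧ k ∈ Set.Icc (0:ℝ) 1 ∧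
      l ∈ Set.Icc (0:ℝ) 1 ∧ t * μ * k ^ 2 ≤ (1 - μ) * l ^ 2 ∧ (1 - μ) * l ≤ t * μ * k ∧
      k ≤ l ∧ x = (1 - μ) * l ^ 2 - t * μ * k ^ 2}
      ((Real.sqrt (1 + 1 / t) - Real.sqrt (1 / t)) ^ 2) ∧
    (Real.sqrt (1 + 1 / t) - Real.sqrt (1 / t)) ^ 2
      = 1 + 2 / t - 2 * Real.sqrt ((1 / t) * (1 + 1 / t)) ∧
    (1 - 1 / Real.sqrt (t + 1)) * 1 ^ 2
        - t * (1 / Real.sqrt (t + 1)) * ((Real.sqrt (t + 1) - 1) / t) ^ 2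
      = (Real.sqrt (1 + 1 / t) - Real.sqrt (1 / t)) ^ 2 := by
  have ht0 : (0:ℝ) < t := by linarith
  set s := Real.sqrt (t + 1) with hs_def
  have hs0 : 0 < s := Real.sqrt_pos.mpr (by linarith)
  have hs2 : s ^ 2 = t + 1 := Real.sq_sqrt (by linarith)
  have hs1 : 1 ≤ s := by nlinarith
  have hst : s ≤ t + 1 := by nlinarith
  set u := Real.sqrt t with hu_def
  have hu0 : 0 < u := Real.sqrt_pos.mpr ht0
  have hu2 : u ^ 2 = t := Real.sq_sqrt ht0.le
  have ha : Real.sqrt (1 + 1 / t) = s / u := by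
    rw [show (1 + 1 / t) = (t + 1) / t by field_simp, hs_def, hu_def,
      Real.sqrt_div (by linarith)]
  have hb : Real.sqrt (1 / t) = 1 / u := by
    rw [one_div, Real.sqrt_inv, hu_def, one_div]
  have hT : (Real.sqrt (1 + 1 / t) - Real.sqrt (1 / t)) ^ 2 = (s - 1) ^ 2 / t := by
    rw [ha, hb, div_sub_div_same, div_pow, hu2]
  -- second conjunct
  have h2 : (Real.sqrt (1 + 1 / t) - Real.sqrt (1 / t)) ^ 2
      = 1 + 2 / t - 2 * Real.sqrt ((1 / t) * (1 + 1 / t)) := by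
    have ha2 : (Real.sqrt (1 + 1 / t)) ^ 2 = 1 + 1 / t := Real.sq_sqrt (by positivity)
    have hb2 : (Real.sqrt (1 / t)) ^ 2 = 1 / t := Real.sq_sqrt (by positivity)
    have hab : Real.sqrt (1 / t) * Real.sqrt (1 + 1 / t)
        = Real.sqrt ((1 / t) * (1 + 1 / t)) := (Real.sqrt_mul (by positivity) _).symm
    linear_combination ha2 + hb2 - 2 * hab
  -- third conjunct
  have h3 : (1 - 1 / s) * 1 ^ 2 - t * (1 / s) * ((s - 1) / t) ^ 2
      = (Real.sqrt (1 + 1 / t) - Real.sqrt (1 / t)) ^ 2 := by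
    rw [hT]
    field_simp
    ring_nf
    linear_combination (1 - s) * hs2
  refine ⟨⟨?_, ?_⟩, h2, h3⟩
  · -- membership
    refine ⟨1 / s, (s - 1) / t, 1, ⟨by positivity, by
      rw [div_le_one hs0]; linarith⟩, ⟨div_nonneg (by linarith) ht0.le, by
      rw [div_le_one ht0]; linarith⟩, ⟨zero_le_one, le_refl 1⟩, ?_, ?_, ?_, h3.symm⟩
    · -- t μ k² ≤ (1-μ) l²
      have e1 : t * (1 / s) * ((s - 1) / t) ^ 2 = (s - 1) ^ 2 / (t * s) := by
        field_simp
      have e2 : (1 - 1 / s) * 1 ^ 2 = (s - 1) / s := by field_simp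
      rw [e1, e2]
      rw [div_le_div_iff₀ (by positivity) hs0]
      nlinarith [hs1, hst, hs0]
    · have e3 : t * (1 / s) * ((s - 1) / t) = 1 - 1 / s := by field_simp
      rw [show (1 - 1/s) * 1 = 1 - 1/s by ring, e3]
    · rw [div_le_one ht0]; linarith
  · -- upper bound
    rintro x ⟨μ, k, l, hμ, hk, hl, hc1, hc2, hkl, hx⟩
    rw [hT]
    subst hx
    exact stmt4_aux t s μ k l ht hs2 hμ.1 hμ.2 hk.1 hl.1 hl.2 hc2 hkl
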